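/- For every element s of a probabilistic abstract reduction system, P(s →* ·) together with P(s →∞) comprise a probability distribution: for every normal form t with s →* t, 0 ≤ P(s →* t) ≤ 1; moreover ∑_{t ∈ NF(s)} P(s →* t) ≤ 1, so that 0 ≤ P(s →∞) ≤ 1 and ∑_{t ∈ NF(s)} P(s →* t) + P(s →∞) = 1. -/

import Mathlib

open scoped ENNReal NNReal

/-- An element `t` is a *normal form* of the reduction relation `r`
if there is no `u` with `r t u`. -/
def NormalForm {A : Type*} (r : A → A → Prop) (t : A) : Prop := ¬∃ u, r t u

/-- `NFof r s` is the set of normal forms reachable from `s`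
via the reflexive-transitive closure of `r`. -/
def NFof {A : Type*} (r : A → A → Prop) (s : A) : Set A :=
  {t | NormalForm r t ∧ Relation.ReflTransGen r s t}

/-- `l` is a finite path from `s` to `t`: a nonempty list starting at `s`,
ending at `t`, whose consecutive elements are related by `r`.
(A list `[s₀, s₁, …, sₙ]` represents the path `s₀ → s₁ → ⋯ → sₙ`, `n ≥ 0`.) -/
def IsPath {A : Type*} (r : A → A → Prop) (s t : A) (l : List A) : Prop :=
  l.Chain' r ∧ l.head? = some s ∧ l.getLast? = some t

/-- Confluence of an abstract reduction system. -/
def Confluent {A : Type*} (r : A → A → Prop) : Prop :=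
  ∀ s s₁ s₂, Relation.ReflTransGen r s s₁ → Relation.ReflTransGen r s s₂ →
    ∃ t, Relation.ReflTransGen r s₁ t ∧ Relation.ReflTransGen r s₂ t

/-- An ARS is normalizing if every element reaches some normal form. -/
def Normalizing {A : Type*} (r : A → A → Prop) : Prop :=
  ∀ s, ∃ t, NormalForm r t ∧ Relation.ReflTransGen r s t

/-- A probabilistic abstract reduction system (PARS) on a countable set `A`:
a reduction relation `rel` and probabilities `P : A → A → ℝ≥0` with
`P s t > 0` iff `s → t`, and `∑ₜ P s t = 1` for every reducible `s`. -/
structure PARS (A : Type*) [Countable A] where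
  rel : A → A → Prop
  P : A → A → ℝ≥0
  pos_iff : ∀ s t, 0 < P s t ↔ rel s t
  sum_one : ∀ s, (∃ t, rel s t) → ∑' t, (P s t : ℝ≥0∞) = 1

namespace PARS

variable {A : Type*} [Countable A]

/-- The probability of a finite path `[s₀, s₁, …, sₙ]`,
namely `∏_{i=1}^n P(s_{i-1}, s_i)`. -/
noncomputable def pathProb (S : PARS A) (l : List A) : ℝ≥0∞ :=
  ((l.zip l.tail).map fun p => (S.P p.1 p.2 : ℝ≥0∞)).prod

/-- `P(s →* t)`: the sum, over all finite paths from `s` to `t`,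
of the path probabilities. -/
noncomputable def probReach (S : PARS A) (s t : A) : ℝ≥0∞ :=
  ∑' l : {l : List A // IsPath S.rel s t l}, S.pathProb l.1

/-- `∑_{t ∈ NF(s)} P(s →* t)`. -/
noncomputable def probNF (S : PARS A) (s : A) : ℝ≥0∞ :=
  ∑' t : NFof S.rel s, S.probReach s t.1

/-- `P(s →∞) := 1 - ∑_{t ∈ NF(s)} P(s →* t)`, the probability of diverging. -/
noncomputable def probDiverge (S : PARS A) (s : A) : ℝ :=
  1 - (S.probNF s).toReal

/-- Almost-sure termination: every element diverges with probability `0`. -/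
def ASTerminating (S : PARS A) : Prop := ∀ s, S.probDiverge s = 0

/-- Almost-sure convergence: whenever `s →* s₁` and `s →* s₂`, there is a
normal form `t` with `s₁ →* t`, `s₂ →* t` and `P(s₁ →* t) = P(s₂ →* t) = 1`. -/
def ASConvergent (S : PARS A) : Prop :=
  ∀ s s₁ s₂, Relation.ReflTransGen S.rel s s₁ → Relation.ReflTransGen S.rel s s₂ →
    ∃ t, NormalForm S.rel t ∧ Relation.ReflTransGen S.rel s₁ t ∧
      Relation.ReflTransGen S.rel s₂ t ∧
      S.probReach s₁ t = 1 ∧ S.probReach s₂ t = 1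

/-- Local almost-sure convergence: whenever `s → s₁` and `s → s₂`, there is a
normal form `t` with `s₁ →* t`, `s₂ →* t` and `P(s₁ →* t) = P(s₂ →* t) = 1`. -/
def LocallyASConvergent (S : PARS A) : Prop :=
  ∀ s s₁ s₂, S.rel s s₁ → S.rel s s₂ →
    ∃ t, NormalForm S.rel t ∧ Relation.ReflTransGen S.rel s₁ t ∧
      Relation.ReflTransGen S.rel s₂ t ∧
      S.probReach s₁ t = 1 ∧ S.probReach s₂ t = 1

end PARS

section AuxProof

variable {A : Type*} [Countable A]

lemma PARS.pathProb_singleton (S : PARS A) (a : A) : S.pathProb [a] = 1 := by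
  simp [PARS.pathProb]

lemma PARS.pathProb_cons_cons (S : PARS A) (a b : A) (l : List A) :
    S.pathProb (a :: b :: l) = (S.P a b : ℝ≥0∞) * S.pathProb (b :: l) := by
  simp [PARS.pathProb]

/-- Key finitary bound: any finite collection of paths from `s` of bounded length,
each ending in a normal form, has total probability at most `1`. -/
lemma PARS.sum_pathProb_le_one (S : PARS A) :
    ∀ (n : ℕ) (s : A) (F : Finset (List A)),
      (∀ l ∈ F, l.Chain' S.rel ∧ l.head? = some s ∧
        (∃ t, l.getLast? = some t ∧ NormalForm S.rel t) ∧ l.length ≤ n + 1) →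
      ∑ l ∈ F, S.pathProb l ≤ 1 := by
  intro n
  induction n with
  | zero =>
    intro s F hF
    have hsub : F ⊆ {[s]} := by
      intro l hl
      obtain ⟨hc, hh, _, hlen⟩ := hF l hl
      cases l with
      | nil => simp at hh
      | cons a l' =>
        have ha : a = s := by simpa using hh
        have : l' = [] := by
          simp only [List.length_cons] at hlen
          exact List.eq_nil_of_length_eq_zero (by omega)
        subst ha; subst this; simp
    calc ∑ l ∈ F, S.pathProb l ≤ ∑ l ∈ ({[s]} : Finset (List A)), S.pathProb l :=
          Finset.sum_le_sum_of_subset hsub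
      _ = 1 := by simp [PARS.pathProb_singleton]
  | succ n ih =>
    intro s F hF
    classical
    by_cases hs : NormalForm S.rel s
    · have hsub : F ⊆ {[s]} := by
        intro l hl
        obtain ⟨hc, hh, _, _⟩ := hF l hl
        cases l with
        | nil => simp at hh
        | cons a l' =>
          have ha : a = s := by simpa using hh
          subst ha
          cases l' with
          | nil => simp
          | cons b l'' =>
            exact absurd ⟨b, (List.isChain_cons_cons.mp hc).1⟩ hs
      calc ∑ l ∈ F, S.pathProb l ≤ ∑ l ∈ ({[s]} : Finset (List A)), S.pathProb l :=
            Finset.sum_le_sum_of_subset hsub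
        _ = 1 := by simp [PARS.pathProb_singleton]
    · haveI : Inhabited A := ⟨s⟩
      have key : ∀ l ∈ F, ∃ u rest, l = s :: u :: rest := by
        intro l hl
        obtain ⟨hc, hh, ⟨t, hlast, htn⟩, _⟩ := hF l hl
        cases l with
        | nil => simp at hh
        | cons a l' =>
          have ha : a = s := by simpa using hh
          cases l' with
          | nil =>
            have hna : NormalForm S.rel a := by
              have hta : t = a := by simpa using hlast.symm
              rwa [hta] at htn
            rw [ha] at hna
            exact absurd hna hs
          | cons b l'' => exact ⟨b, l'', by rw [ha]⟩
      set G : Finset (List A) := F.image List.tail with hGdef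
      -- properties of members of G
      have hGmem : ∀ l' ∈ G, ∃ u rest, l' = u :: rest ∧ S.rel s u ∧
          l'.Chain' S.rel ∧ (∃ t, l'.getLast? = some t ∧ NormalForm S.rel t) ∧
          l'.length ≤ n + 1 := by
        intro l' hl'
        obtain ⟨l, hl, rfl⟩ := Finset.mem_image.mp hl'
        obtain ⟨u, rest, rfl⟩ := key l hl
        obtain ⟨hc, _, ⟨t, hlast, htn⟩, hlen⟩ := hF _ hl
        simp only [List.tail_cons]
        replace hc := List.isChain_cons_cons.mp hc
        refine ⟨u, rest, rfl, hc.1, hc.2, ⟨t, ?_, htn⟩, ?_⟩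
        · rw [List.getLast?_cons_cons] at hlast; exact hlast
        · simp only [List.length_cons] at hlen ⊢; omega
      have hsum : ∑ l ∈ F, S.pathProb l = ∑ l' ∈ G, S.pathProb (s :: l') := by
        rw [hGdef, Finset.sum_image]
        · apply Finset.sum_congr rfl
          intro l hl
          obtain ⟨u, rest, rfl⟩ := key l hl
          rfl
        · intro x hx y hy h
          obtain ⟨u, rest, rfl⟩ := key x hx
          obtain ⟨u', rest', rfl⟩ := key y hy
          simpa using h
      set U : Finset A := G.image List.headI with hUdef
      have hfib : ∑ u ∈ U, ∑ l' ∈ G.filter (fun l' => l'.headI = u), S.pathProb (s :: l')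
          = ∑ l' ∈ G, S.pathProb (s :: l') :=
        Finset.sum_fiberwise_of_maps_to (fun l' hl' => Finset.mem_image_of_mem _ hl') _
      have hinner : ∀ u ∈ U, ∑ l' ∈ G.filter (fun l' => l'.headI = u), S.pathProb (s :: l')
          ≤ (S.P s u : ℝ≥0∞) := by
        intro u hu
        have hmem : ∀ l' ∈ G.filter (fun l' => l'.headI = u), ∃ rest, l' = u :: rest := by
          intro l' hl'
          obtain ⟨hl'G, hh⟩ := Finset.mem_filter.mp hl'
          obtain ⟨u', rest, rfl, _⟩ := hGmem l' hl'G
          simp only [List.headI] at hh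
          exact ⟨rest, by rw [hh]⟩
        have hcong : ∀ l' ∈ G.filter (fun l' => l'.headI = u),
            S.pathProb (s :: l') = (S.P s u : ℝ≥0∞) * S.pathProb l' := by
          intro l' hl'
          obtain ⟨rest, rfl⟩ := hmem l' hl'
          exact S.pathProb_cons_cons s u rest
        rw [Finset.sum_congr rfl hcong, ← Finset.mul_sum]
        calc (S.P s u : ℝ≥0∞) * ∑ l' ∈ G.filter (fun l' => l'.headI = u), S.pathProb l'
            ≤ (S.P s u : ℝ≥0∞) * 1 := by
              apply mul_le_mul_right
              apply ih u
              intro l' hl'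
              obtain ⟨rest, rfl⟩ := hmem l' hl'
              obtain ⟨u', rest', heq, _, hc, hlast, hlen⟩ := hGmem _ (Finset.mem_filter.mp hl').1
              exact ⟨hc, by simp, hlast, hlen⟩
          _ = (S.P s u : ℝ≥0∞) := mul_one _
      have hrel : ∃ t, S.rel s t := not_not.mp hs
      calc ∑ l ∈ F, S.pathProb l = ∑ l' ∈ G, S.pathProb (s :: l') := hsum
        _ = ∑ u ∈ U, ∑ l' ∈ G.filter (fun l' => l'.headI = u), S.pathProb (s :: l') := hfib.symm
        _ ≤ ∑ u ∈ U, (S.P s u : ℝ≥0∞) := Finset.sum_le_sum hinner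
        _ ≤ ∑' u, (S.P s u : ℝ≥0∞) := ENNReal.sum_le_tsum U
        _ = 1 := S.sum_one s hrel

lemma PARS.probNF_le_one (S : PARS A) (s : A) : S.probNF s ≤ 1 := by
  classical
  have h1 : S.probNF s
      = ∑' (p : Σ t : ↥(NFof S.rel s), {l : List A // IsPath S.rel s t.1 l}),
          S.pathProb p.2.1 := by
    rw [PARS.probNF]
    simp only [PARS.probReach]
    exact (ENNReal.tsum_sigma' (f := fun p : Σ t : ↥(NFof S.rel s), {l : List A // IsPath S.rel s t.1 l} => S.pathProb p.2.1)).symm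
  rw [h1, ENNReal.tsum_eq_iSup_sum]
  apply iSup_le
  intro F
  have hinj : ∀ x ∈ F, ∀ y ∈ F, x.2.1 = y.2.1 → x = y := by
    rintro ⟨⟨t1, ht1⟩, ⟨l1, hp1⟩⟩ - ⟨⟨t2, ht2⟩, ⟨l2, hp2⟩⟩ - h
    simp only at h
    subst h
    have ht : t1 = t2 := by
      have e1 := hp1.2.2
      have e2 := hp2.2.2
      rw [e1] at e2
      exact Option.some.inj e2
    subst ht
    rfl
  set G : Finset (List A) := F.image (fun p => p.2.1) with hGdef
  have heq : ∑ a ∈ F, S.pathProb a.2.1 = ∑ l ∈ G, S.pathProb l :=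
    (Finset.sum_image (g := fun p : Σ t : ↥(NFof S.rel s), {l : List A // IsPath S.rel s t.1 l} => p.2.1) (f := S.pathProb) hinj).symm
  rw [heq]
  apply S.sum_pathProb_le_one (G.sup List.length) s
  intro l hl
  obtain ⟨p, hp, rfl⟩ := Finset.mem_image.mp (hGdef ▸ hl)
  obtain ⟨hc, hh, hlast⟩ := p.2.2
  refine ⟨hc, hh, ⟨p.1.1, hlast, p.1.2.1⟩, ?_⟩
  have := Finset.le_sup (f := List.length) hl
  omega

end AuxProof

/-- for every element `s`, `P(s →* ·)` together with `P(s →∞)`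
is a probability distribution: each `P(s →* t) ≤ 1` for `t ∈ NF(s)`,
`∑_{t ∈ NF(s)} P(s →* t) ≤ 1`, `0 ≤ P(s →∞) ≤ 1` and
`∑_{t ∈ NF(s)} P(s →* t) + P(s →∞) = 1`. -/
theorem probReach_probDiverge_distribution
    {A : Type*} [Countable A] (S : PARS A) (s : A) :
    (∀ t ∈ NFof S.rel s, S.probReach s t ≤ 1) ∧
    S.probNF s ≤ 1 ∧
    0 ≤ S.probDiverge s ∧ S.probDiverge s ≤ 1 ∧
    (S.probNF s).toReal + S.probDiverge s = 1 := by
  have h2 : S.probNF s ≤ 1 := S.probNF_le_one s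
  have hreach : ∀ t ∈ NFof S.rel s, S.probReach s t ≤ 1 := by
    intro t ht
    have hle : S.probReach s t ≤ S.probNF s := by
      rw [PARS.probNF]
      exact ENNReal.le_tsum (⟨t, ht⟩ : ↥(NFof S.rel s))
    exact hle.trans h2
  have hne : S.probNF s ≠ ⊤ := ne_top_of_le_ne_top ENNReal.one_ne_top h2
  have htr : (S.probNF s).toReal ≤ 1 := by
    have := ENNReal.toReal_mono ENNReal.one_ne_top h2
    simpa using this
  have htr0 : (0:ℝ) ≤ (S.probNF s).toReal := ENNReal.toReal_nonneg
  refine ⟨hreach, h2, ?_, ?_, ?_⟩ <;> unfold PARS.probDiverge <;> linarith
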